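/- MZV duality in weight 3: ζ(3) = ζ(2,1), i.e. ∑_{n≥1} 1/n³ = ∑_{n>m≥1} 1/(n²m). -/

import Mathlib

open Filter Finset Function

namespace MzvWt3

/-- Harmonic number `H n = ∑_{j=1}^n 1/j`. -/
noncomputable def H (n : ℕ) : ℝ := ∑ j ∈ Finset.range n, 1 / ((j : ℝ) + 1)

/-- The MZV(2,1) summand with shifted indices. -/
noncomputable def g (a b : ℕ) : ℝ := 1 / (((a : ℝ) + (b : ℝ) + 2) ^ 2 * ((b : ℝ) + 1))

/-- The symmetric summand. -/
noncomputable def s (a b : ℕ) : ℝ :=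
  1 / (((a : ℝ) + (b : ℝ) + 2) * (((a : ℝ) + 1) * ((b : ℝ) + 1)))

/-- Original double-sum summand. -/
noncomputable def F (n m : ℕ) : ℝ :=
  if 0 < m ∧ m < n then 1 / ((n : ℝ) ^ 2 * (m : ℝ)) else 0

lemma summable_shift_rpow : Summable (fun n : ℕ => 1 / ((n : ℝ) + 1) ^ ((3:ℝ)/2)) := by
  have h1 : Summable (fun n : ℕ => 1 / ((n : ℝ)) ^ ((3:ℝ)/2)) :=
    Real.summable_one_div_nat_rpow.2 (by norm_num)
  have h2 := (summable_nat_add_iff (f := fun n : ℕ => 1 / ((n : ℝ)) ^ ((3:ℝ)/2)) 1).2 h1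
  refine h2.congr fun n => ?_
  push_cast
  ring_nf

lemma summable_shift_pow (p : ℕ) (hp : 1 < p) :
    Summable (fun n : ℕ => 1 / ((n : ℝ) + 1) ^ p) := by
  have h1 : Summable (fun n : ℕ => 1 / ((n : ℝ)) ^ p) :=
    Real.summable_one_div_nat_pow.2 hp
  have h2 := (summable_nat_add_iff (f := fun n : ℕ => 1 / ((n : ℝ)) ^ p) 1).2 h1
  refine h2.congr fun n => ?_
  push_cast
  ring_nf

lemma g_nonneg (a b : ℕ) : 0 ≤ g a b := by unfold g; positivity

lemma s_nonneg (a b : ℕ) : 0 ≤ s a b := by unfold s; positivity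

lemma F_nonneg (n m : ℕ) : 0 ≤ F n m := by
  unfold F; split <;> positivity

lemma rpow_bound {x y N : ℝ} (hx0 : 0 < x) (hy0 : 0 < y) (hxN : x ≤ N) (hyN : y ≤ N) :
    1 / (N ^ 2 * y) ≤ (1 / x ^ ((3:ℝ)/2)) * (1 / y ^ ((3:ℝ)/2)) := by
  have hN0 : (0:ℝ) < N := lt_of_lt_of_le hx0 hxN
  have h1 : x ^ ((3:ℝ)/2) ≤ N ^ ((3:ℝ)/2) := Real.rpow_le_rpow hx0.le hxN (by norm_num)
  have h2 : y ^ ((1:ℝ)/2) ≤ N ^ ((1:ℝ)/2) := Real.rpow_le_rpow hy0.le hyN (by norm_num)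
  have hysplit : y ^ ((3:ℝ)/2) = y ^ ((1:ℝ)/2) * y := by
    have h : y ^ ((1:ℝ)/2) * y ^ (1:ℝ) = y ^ ((1:ℝ)/2 + 1) := (Real.rpow_add hy0 _ _).symm
    rw [Real.rpow_one] at h
    rw [h]
    norm_num
  have hNsplit : N ^ ((3:ℝ)/2) * N ^ ((1:ℝ)/2) = N ^ 2 := by
    rw [← Real.rpow_add hN0]
    rw [show ((3:ℝ)/2 + 1/2 : ℝ) = ((2:ℕ):ℝ) by norm_num, Real.rpow_natCast]
  have key : x ^ ((3:ℝ)/2) * y ^ ((3:ℝ)/2) ≤ N ^ 2 * y := by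
    calc x ^ ((3:ℝ)/2) * y ^ ((3:ℝ)/2) = x ^ ((3:ℝ)/2) * y ^ ((1:ℝ)/2) * y := by
          rw [hysplit]; ring
      _ ≤ N ^ ((3:ℝ)/2) * N ^ ((1:ℝ)/2) * y := by
          have hx32 : 0 ≤ x ^ ((3:ℝ)/2) := Real.rpow_nonneg hx0.le _
          have hy12 : 0 ≤ y ^ ((1:ℝ)/2) := Real.rpow_nonneg hy0.le _
          have hN12 : 0 ≤ N ^ ((1:ℝ)/2) := Real.rpow_nonneg hN0.le _
          have := mul_le_mul h1 h2 hy12 (Real.rpow_nonneg hN0.le ((3:ℝ)/2))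
          nlinarith
      _ = N ^ 2 * y := by rw [hNsplit]
  have hpos : (0:ℝ) < x ^ ((3:ℝ)/2) * y ^ ((3:ℝ)/2) := by
    have hx' := Real.rpow_pos_of_pos hx0 ((3:ℝ)/2)
    have hy' := Real.rpow_pos_of_pos hy0 ((3:ℝ)/2)
    positivity
  calc 1 / (N ^ 2 * y) ≤ 1 / (x ^ ((3:ℝ)/2) * y ^ ((3:ℝ)/2)) :=
        one_div_le_one_div_of_le hpos key
    _ = (1 / x ^ ((3:ℝ)/2)) * (1 / y ^ ((3:ℝ)/2)) := by
        rw [div_mul_div_comm, one_mul]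

/-- Key bound: `g a b ≤ (a+1)^{-3/2} (b+1)^{-3/2}`. -/
lemma g_le (a b : ℕ) :
    g a b ≤ (1 / ((a : ℝ) + 1) ^ ((3:ℝ)/2)) * (1 / ((b : ℝ) + 1) ^ ((3:ℝ)/2)) := by
  unfold g
  apply rpow_bound
  · positivity
  · positivity
  · linarith [Nat.cast_nonneg (α := ℝ) b]
  · linarith [Nat.cast_nonneg (α := ℝ) a]

set_option maxHeartbeats 1600000 in
lemma summable_G : Summable (fun p : ℕ × ℕ => g p.1 p.2) := by
  have hmaj : Summable (fun p : ℕ × ℕ =>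
      (1 / ((p.1 : ℝ) + 1) ^ ((3:ℝ)/2)) * (1 / ((p.2 : ℝ) + 1) ^ ((3:ℝ)/2))) :=
    summable_shift_rpow.mul_of_nonneg summable_shift_rpow
      (fun n => by positivity) (fun n => by positivity)
  exact hmaj.of_nonneg_of_le (fun p => g_nonneg p.1 p.2) (fun p => g_le p.1 p.2)

lemma summable_G' : Summable (fun p : ℕ × ℕ => g p.2 p.1) :=
  (Equiv.prodComm ℕ ℕ).summable_iff.2 summable_G

lemma g_add_g (a b : ℕ) : g a b + g b a = s a b := by
  unfold g s
  have h1 : (0:ℝ) < (a : ℝ) + (b : ℝ) + 2 := by positivity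
  have h2 : (0:ℝ) < (a : ℝ) + 1 := by positivity
  have h3 : (0:ℝ) < (b : ℝ) + 1 := by positivity
  field_simp
  ring

lemma summable_S : Summable (fun p : ℕ × ℕ => s p.1 p.2) :=
  (summable_G.add summable_G').congr fun p => g_add_g p.1 p.2

/-- The injection realizing `ℕ × ℕ ≃ {(n,m) : 0 < m < n}`. -/
def i (p : ℕ × ℕ) : ℕ × ℕ := (p.1 + p.2 + 2, p.2 + 1)

lemma i_injective : Function.Injective i := by
  rintro ⟨a, b⟩ ⟨c, d⟩ h
  simp only [i, Prod.mk.injEq] at h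
  obtain ⟨h1, h2⟩ := h
  simp only [Prod.mk.injEq]
  omega

lemma F_support : ∀ p : ℕ × ℕ, p ∉ Set.range i → F p.1 p.2 = 0 := by
  rintro ⟨n, m⟩ hp
  unfold F
  split
  · rename_i h
    exfalso
    exact hp ⟨(n - m - 1, m - 1), by simp only [i, Prod.mk.injEq]; omega⟩
  · rfl

lemma F_subset_range :
    Function.support (fun p : ℕ × ℕ => F p.1 p.2) ⊆ Set.range i := by
  intro p hp
  by_contra h
  exact hp (F_support p h)

lemma F_comp_i (p : ℕ × ℕ) : F (i p).1 (i p).2 = g p.1 p.2 := by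
  obtain ⟨a, b⟩ := p
  simp only [i, F, g]
  simp only [show 0 < b + 1 ∧ b + 1 < a + b + 2 from by omega, and_self, ↓reduceIte]
  push_cast
  ring_nf

lemma summable_F : Summable (fun p : ℕ × ℕ => F p.1 p.2) := by
  rw [← i_injective.summable_iff F_support]
  exact summable_G.congr fun p => (F_comp_i p).symm

lemma tsum_F_eq_T : ∑' p : ℕ × ℕ, F p.1 p.2 = ∑' p : ℕ × ℕ, g p.1 p.2 := by
  rw [← i_injective.tsum_eq (f := fun p : ℕ × ℕ => F p.1 p.2) F_subset_range]
  exact tsum_congr fun p => F_comp_i p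

lemma row_zero : ∑' m : ℕ, F 0 m = 0 := by
  have h : ∀ m : ℕ, F 0 m = 0 := fun m => by unfold F; simp
  simp [h]

lemma row_succ (n : ℕ) : ∑' m : ℕ, F (n + 1) m = H n / ((n : ℝ) + 1) ^ 2 := by
  have hzero : ∀ m ∉ Finset.range (n + 1), F (n + 1) m = 0 := by
    intro m hm
    simp only [Finset.mem_range] at hm
    unfold F
    rw [if_neg (by omega)]
  rw [tsum_eq_sum hzero, Finset.sum_range_succ']
  have hF0 : F (n + 1) 0 = 0 := by unfold F; simp
  rw [hF0, add_zero]
  have h : ∀ j ∈ Finset.range n, F (n + 1) (j + 1)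
      = (1 / ((n : ℝ) + 1) ^ 2) * (1 / ((j : ℝ) + 1)) := by
    intro j hj
    simp only [Finset.mem_range] at hj
    unfold F
    rw [if_pos (by omega)]
    push_cast
    rw [div_mul_div_comm, one_mul]
  rw [Finset.sum_congr rfl h, ← Finset.mul_sum]
  unfold H
  ring

lemma summable_row (n : ℕ) : Summable (fun m : ℕ => F n m) :=
  summable_of_ne_finset_zero (s := Finset.range (n + 1)) (by
    intro m hm
    simp only [Finset.mem_range] at hm
    unfold F
    rw [if_neg (by omega)])

lemma summable_rows : Summable (fun n : ℕ => ∑' m : ℕ, F n m) :=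
  ((summable_prod_of_nonneg (f := fun p : ℕ × ℕ => F p.1 p.2)
    (fun p => F_nonneg p.1 p.2)).1 summable_F).2

/-- Telescoping partial sums. -/
lemma partial_sum (a N : ℕ) :
    ∑ b ∈ Finset.range N, 1 / (((b : ℝ) + 1) * ((b : ℝ) + (a : ℝ) + 2))
      = (H (a + 1) - ∑ j ∈ Finset.range (a + 1), 1 / ((N : ℝ) + (j : ℝ) + 1))
        / ((a : ℝ) + 1) := by
  induction N with
  | zero =>
      simp only [Finset.range_zero, Finset.sum_empty, Nat.cast_zero]
      have h : ∑ j ∈ Finset.range (a + 1), 1 / ((0 : ℝ) + (j : ℝ) + 1) = H (a + 1) := by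
        unfold H
        refine Finset.sum_congr rfl fun j _ => by ring_nf
      rw [h]
      simp
  | succ N ih =>
      rw [Finset.sum_range_succ, ih]
      have htel := Finset.sum_range_sub' (fun j : ℕ => 1 / ((N : ℝ) + (j : ℝ) + 1)) (a + 1)
      rw [Finset.sum_sub_distrib] at htel
      push_cast at htel
      push_cast
      have hQ : ∑ x ∈ Finset.range (a + 1), 1 / ((N : ℝ) + 1 + (x : ℝ) + 1)
          = ∑ j ∈ Finset.range (a + 1), 1 / ((N : ℝ) + ((j : ℝ) + 1) + 1) :=
        Finset.sum_congr rfl fun j _ => by ring_nf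
      rw [hQ]
      have e0 : (N : ℝ) + 0 + 1 = (N : ℝ) + 1 := by ring
      rw [e0] at htel
      have ea : (N : ℝ) + ((a : ℝ) + 1) + 1 = (N : ℝ) + (a : ℝ) + 2 := by ring
      rw [ea] at htel
      -- htel : P - Q = 1/(N+1) - 1/(N+a+2)
      have hN1 : ((N : ℝ) + 1) ≠ 0 := by positivity
      have hNa : ((N : ℝ) + (a : ℝ) + 2) ≠ 0 := by positivity
      have ha1 : ((a : ℝ) + 1) ≠ 0 := by positivity
      set P := ∑ j ∈ Finset.range (a + 1), 1 / ((N : ℝ) + (j : ℝ) + 1) with hP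
      set Q := ∑ j ∈ Finset.range (a + 1), 1 / ((N : ℝ) + ((j : ℝ) + 1) + 1) with hQ'
      have hQeq : Q = P - (1 / ((N : ℝ) + 1) - 1 / ((N : ℝ) + (a : ℝ) + 2)) := by
        linarith [htel]
      rw [hQeq]
      field_simp
      ring
  
lemma tendsto_tail (a : ℕ) :
    Tendsto (fun N : ℕ => ∑ j ∈ Finset.range (a + 1), 1 / ((N : ℝ) + (j : ℝ) + 1))
      atTop (nhds 0) := by
  have h : ∀ j ∈ Finset.range (a + 1),
      Tendsto (fun N : ℕ => 1 / ((N : ℝ) + (j : ℝ) + 1)) atTop (nhds 0) := by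
    intro j _
    have h1 : Tendsto (fun N : ℕ => ((N : ℝ) + (j : ℝ) + 1)) atTop atTop := by
      apply tendsto_atTop_add_const_right
      apply tendsto_atTop_add_const_right
      exact tendsto_natCast_atTop_atTop
    simpa [one_div, Pi.inv_def] using h1.inv_tendsto_atTop
  have := tendsto_finset_sum (Finset.range (a + 1)) h
  simpa using this

lemma summable_inner (a : ℕ) :
    Summable (fun b : ℕ => 1 / (((b : ℝ) + 1) * ((b : ℝ) + (a : ℝ) + 2))) := by
  refine (summable_shift_pow 2 (by norm_num)).of_nonneg_of_le
    (fun b => by positivity) (fun b => ?_)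
  have h1 : (0:ℝ) < ((b : ℝ) + 1) * ((b : ℝ) + 1) := by positivity
  have h2 : ((b : ℝ) + 1) * ((b : ℝ) + 1) ≤ ((b : ℝ) + 1) * ((b : ℝ) + (a : ℝ) + 2) := by
    have h3 : ((b : ℝ) + 1) ≤ ((b : ℝ) + (a : ℝ) + 2) := by
      linarith [Nat.cast_nonneg (α := ℝ) a]
    nlinarith
  calc 1 / (((b : ℝ) + 1) * ((b : ℝ) + (a : ℝ) + 2))
      ≤ 1 / (((b : ℝ) + 1) * ((b : ℝ) + 1)) := one_div_le_one_div_of_le h1 h2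
    _ = 1 / ((b : ℝ) + 1) ^ 2 := by ring_nf

lemma telescope (a : ℕ) :
    ∑' b : ℕ, 1 / (((b : ℝ) + 1) * ((b : ℝ) + (a : ℝ) + 2))
      = H (a + 1) / ((a : ℝ) + 1) := by
  have hs := summable_inner a
  have h1 : Tendsto (fun N : ℕ => ∑ b ∈ Finset.range N,
      1 / (((b : ℝ) + 1) * ((b : ℝ) + (a : ℝ) + 2))) atTop
      (nhds (H (a + 1) / ((a : ℝ) + 1))) := by
    have h2 : Tendsto (fun N : ℕ =>
        (H (a + 1) - ∑ j ∈ Finset.range (a + 1), 1 / ((N : ℝ) + (j : ℝ) + 1))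
          / ((a : ℝ) + 1)) atTop (nhds ((H (a + 1) - 0) / ((a : ℝ) + 1))) :=
      (Tendsto.sub tendsto_const_nhds (tendsto_tail a)).div_const _
    rw [sub_zero] at h2
    exact h2.congr fun N => (partial_sum a N).symm
  exact ((hs.hasSum_iff_tendsto_nat).2 h1).tsum_eq

lemma s_eq (a b : ℕ) :
    (1 / ((a : ℝ) + 1)) * (1 / (((b : ℝ) + 1) * ((b : ℝ) + (a : ℝ) + 2))) = s a b := by
  unfold s
  rw [div_mul_div_comm, one_mul]
  congr 1
  ring

lemma inner_S (a : ℕ) :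
    ∑' b : ℕ, s a b = H (a + 1) / ((a : ℝ) + 1) ^ 2 := by
  rw [tsum_congr fun b => (s_eq a b).symm,
    (summable_inner a).tsum_mul_left (1 / ((a : ℝ) + 1)), telescope a]
  rw [div_mul_div_comm, one_mul, ← sq]

lemma summable_S_rows (a : ℕ) : Summable (fun b : ℕ => s a b) :=
  ((summable_inner a).mul_left (1 / ((a : ℝ) + 1))).congr fun b => s_eq a b

end MzvWt3

open MzvWt3 Filter Finset Function in
theorem mzv_duality_wt3 :
    ∑' n : ℕ, 1 / (n : ℝ) ^ 3
      = ∑' n : ℕ, ∑' m : ℕ,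
          if 0 < m ∧ m < n then 1 / ((n : ℝ) ^ 2 * (m : ℝ)) else 0 := by
  have hBdef : (∑' n : ℕ, ∑' m : ℕ,
      if 0 < m ∧ m < n then 1 / ((n : ℝ) ^ 2 * (m : ℝ)) else 0)
      = ∑' n : ℕ, ∑' m : ℕ, F n m := rfl
  rw [hBdef]
  -- B = T
  have hBT : (∑' n : ℕ, ∑' m : ℕ, F n m) = ∑' p : ℕ × ℕ, g p.1 p.2 := by
    rw [← tsum_F_eq_T]
    exact (Summable.tsum_prod' summable_F summable_row).symm
  -- swapped T
  have hswap : (∑' p : ℕ × ℕ, g p.2 p.1) = ∑' p : ℕ × ℕ, g p.1 p.2 :=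
    (Equiv.prodComm ℕ ℕ).tsum_eq (fun p : ℕ × ℕ => g p.1 p.2)
  -- 2T = S
  have h2T : (∑' p : ℕ × ℕ, g p.1 p.2) + (∑' p : ℕ × ℕ, g p.1 p.2)
      = ∑' p : ℕ × ℕ, s p.1 p.2 := by
    nth_rewrite 2 [← hswap]
    rw [← Summable.tsum_add summable_G summable_G']
    exact tsum_congr fun p => g_add_g p.1 p.2
  -- S = B + A
  have hSBA : (∑' p : ℕ × ℕ, s p.1 p.2)
      = (∑' n : ℕ, ∑' m : ℕ, F n m) + ∑' n : ℕ, 1 / (n : ℝ) ^ 3 := by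
    rw [Summable.tsum_prod' summable_S summable_S_rows]
    have hrow : ∀ a : ℕ, ∑' b : ℕ, s a b
        = H a / ((a : ℝ) + 1) ^ 2 + 1 / ((a : ℝ) + 1) ^ 3 := by
      intro a
      rw [inner_S a]
      unfold H
      rw [Finset.sum_range_succ]
      have ha : ((a : ℝ) + 1) ≠ 0 := by positivity
      field_simp
    rw [tsum_congr hrow]
    have hsum1 : Summable (fun a : ℕ => H a / ((a : ℝ) + 1) ^ 2) := by
      have h := (summable_nat_add_iff
        (f := fun n : ℕ => ∑' m : ℕ, F n m) 1).2 summable_rows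
      refine h.congr fun a => ?_
      rw [row_succ a]
    have hsum2 : Summable (fun a : ℕ => 1 / ((a : ℝ) + 1) ^ 3) :=
      summable_shift_pow 3 (by norm_num)
    rw [Summable.tsum_add hsum1 hsum2]
    congr 1
    · rw [Summable.tsum_eq_zero_add summable_rows, row_zero, zero_add]
      exact tsum_congr fun a => (row_succ a).symm
    · have hA3 : Summable (fun n : ℕ => 1 / (n : ℝ) ^ 3) :=
        Real.summable_one_div_nat_pow.2 (by norm_num)
      rw [Summable.tsum_eq_zero_add hA3]
      have h0 : (1:ℝ) / ((0:ℕ):ℝ) ^ 3 = 0 := by norm_num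
      rw [h0, zero_add]
      exact tsum_congr fun a => by push_cast; ring_nf
  -- conclude
  rw [hBT] at hSBA ⊢
  linarith [h2T, hSBA]
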